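/- For the Lie algebra ĝ = ℝ³ × ℝ³ with bracket [(u;z),(u';z')] = ((0, u₃u'₁ - u₁u'₃, u₁u'₂ - u₂u'₁); u × u') (where u = (u₁,u₂,u₃) with u₁ the angular part, and × is the cross product), the quadratic function F̄(μ,σ) = p₁² + p₂² + 2σ₀k + 2σ₁p₁ + 2σ₂p₂ on the dual ĝ* (with coordinates μ = (k,p₁,p₂), σ = (σ₀,σ₁,σ₂)) is a Casimir of the minus Lie-Poisson bracket: {F̄, K}⁻ = 0 for every smooth K. -/

import Mathlib

noncomputable def pd (i : Fin 6) (F : (Fin 6 → ℝ) → ℝ) (ν : Fin 6 → ℝ) : ℝ :=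
  fderiv ℝ F ν (Pi.single i 1)

noncomputable def liePoisson (F K : (Fin 6 → ℝ) → ℝ) (ν : Fin 6 → ℝ) : ℝ :=
  (-(ν 2 + ν 5)) * (pd 0 F ν * pd 1 K ν - pd 1 F ν * pd 0 K ν) +
  (ν 1 + ν 4) * (pd 0 F ν * pd 2 K ν - pd 2 F ν * pd 0 K ν) +
  (-(ν 3)) * (pd 1 F ν * pd 2 K ν - pd 2 F ν * pd 1 K ν)

open ContinuousLinearMap in
noncomputable def Lmap (ν : Fin 6 → ℝ) : (Fin 6 → ℝ) →L[ℝ] ℝ :=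
  (2*ν 3) • proj 0 + (2*ν 1 + 2*ν 4) • proj 1 + (2*ν 2 + 2*ν 5) • proj 2 +
  (2*ν 0) • proj 3 + (2*ν 1) • proj 4 + (2*ν 2) • proj 5

open ContinuousLinearMap in
lemma hasF (ν : Fin 6 → ℝ) :
    HasFDerivAt (fun ν : Fin 6 → ℝ => (ν 1) ^ 2 + (ν 2) ^ 2 + 2 * ν 3 * ν 0 + 2 * ν 4 * ν 1 +
      2 * ν 5 * ν 2) (Lmap ν) ν := by
  have h : ∀ i : Fin 6, HasFDerivAt (fun ν : Fin 6 → ℝ => ν i)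
      ((proj i : (Fin 6 → ℝ) →L[ℝ] ℝ)) ν :=
    fun i => (proj i : (Fin 6 → ℝ) →L[ℝ] ℝ).hasFDerivAt
  simp only [pow_two]
  have := ((((h 1).mul (h 1)).add ((h 2).mul (h 2))).add
      (((hasFDerivAt_const (2:ℝ) ν).mul (h 3)).mul (h 0))).add
      (((hasFDerivAt_const (2:ℝ) ν).mul (h 4)).mul (h 1)) |>.add
      (((hasFDerivAt_const (2:ℝ) ν).mul (h 5)).mul (h 2))
  refine this.congr_fderiv ?_
  ext v
  simp [Lmap]
  ring

lemma pdF (i : Fin 6) (ν : Fin 6 → ℝ) :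
    pd i (fun ν => (ν 1) ^ 2 + (ν 2) ^ 2 + 2 * ν 3 * ν 0 + 2 * ν 4 * ν 1 +
      2 * ν 5 * ν 2) ν = Lmap ν (Pi.single i 1) := by
  rw [pd, (hasF ν).fderiv]

theorem Fbar_is_casimir :
    ∀ K : (Fin 6 → ℝ) → ℝ, Differentiable ℝ K → ∀ ν : Fin 6 → ℝ,
      liePoisson
        (fun ν => (ν 1) ^ 2 + (ν 2) ^ 2 + 2 * ν 3 * ν 0 + 2 * ν 4 * ν 1 +
          2 * ν 5 * ν 2)
        K ν = 0 := by
  intro K _ ν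
  simp only [liePoisson, pdF, Lmap]
  simp [Pi.single_apply]
  ring
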